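/- Let 0 < a < b, σ1, σ2 > 0, ρ ∈ (−1, 1), and let f1 : ℝ → ℝ^{p1} and f2 : ℝ → ℝ^{p2} be continuously differentiable on [a, b]. Let Σ = [[σ1², ρσ1σ2], [ρσ1σ2, σ2²]], let F : ℝ → ℝ^{(p1+p2)×2} be the matrix whose first column is (f1(t)ᵀ, 0)ᵀ and whose second column is (0, f2(t)ᵀ)ᵀ, and define the joint information matrix M := ∫_a^b Ḟ(t) Σ⁻¹ Ḟ(t)ᵀ dt + (1/a)·F(a) Σ⁻¹ F(a)ᵀ and the marginal information matrix M11 := ∫_a^b ḟ1(t) ḟ1(t)ᵀ dt + (1/a)·f1(a) f1(a)ᵀ. If M and M11 are invertible, then σ1²·M11⁻¹ minus the top-left p1×p1 block of M⁻¹ is positive semidefinite. -/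

import Mathlib

open Matrix MeasureTheory intervalIntegral

lemma aux_deriv_cont {a b : ℝ} (hab : a < b) {f : ℝ → ℝ}
    (hf : ContDiffOn ℝ 1 f (Set.Icc a b)) :
    ∃ g : ℝ → ℝ, ContinuousOn g (Set.Icc a b) ∧ ∀ t ∈ Set.Ioo a b, deriv f t = g t :=
  ⟨derivWithin f (Set.Icc a b),
    hf.continuousOn_derivWithin (uniqueDiffOn_Icc hab) le_rfl,
    fun t ht => (derivWithin_of_mem_nhds (Icc_mem_nhds ht.1 ht.2)).symm⟩

lemma aux_II {a b : ℝ} (hab : a < b) {φ ψ : ℝ → ℝ}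
    (hφ : ∃ g : ℝ → ℝ, ContinuousOn g (Set.Icc a b) ∧ ∀ t ∈ Set.Ioo a b, φ t = g t)
    (hψ : ∃ g : ℝ → ℝ, ContinuousOn g (Set.Icc a b) ∧ ∀ t ∈ Set.Ioo a b, ψ t = g t) :
    IntervalIntegrable (fun t => φ t * ψ t) volume a b := by
  obtain ⟨g, hg, hφg⟩ := hφ
  obtain ⟨h, hh, hψh⟩ := hψ
  have hgh : IntervalIntegrable (fun t => g t * h t) volume a b :=
    (hg.mul hh).intervalIntegrable_of_Icc hab.le
  rw [intervalIntegrable_iff, Set.uIoc_of_le hab.le] at hgh ⊢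
  have hres : volume.restrict (Set.Ioc a b) = volume.restrict (Set.Ioo a b) :=
    (Measure.restrict_congr_set MeasureTheory.Ioo_ae_eq_Ioc).symm
  refine hgh.congr ?_
  rw [MeasureTheory.IntegrableOn, hres] at *
  filter_upwards [ae_restrict_mem measurableSet_Ioo] with t ht
  rw [hφg t ht, hψh t ht]

lemma aux_qf {m n : Type*} [Fintype m] [Fintype n] (B : Matrix m n ℝ) (C : Matrix n n ℝ)
    (z : m → ℝ) : z ⬝ᵥ ((B * C * Bᵀ) *ᵥ z) = (Bᵀ *ᵥ z) ⬝ᵥ (C *ᵥ (Bᵀ *ᵥ z)) := by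
  rw [← Matrix.mulVec_mulVec, ← Matrix.mulVec_mulVec, Matrix.dotProduct_mulVec,
    ← Matrix.mulVec_transpose]

lemma aux_rank1 {n : Type*} [Fintype n] (v z : n → ℝ) :
    z ⬝ᵥ ((Matrix.of fun i j => v i * v j) *ᵥ z) = (v ⬝ᵥ z) ^ 2 := by
  simp only [dotProduct, Matrix.mulVec, Matrix.of_apply, Finset.mul_sum]
  rw [sq, Finset.sum_mul_sum]
  exact Finset.sum_congr rfl fun i _ => Finset.sum_congr rfl fun j _ => by ring

lemma aux_dot_expand {n : Type*} [Fintype n] (A : Matrix n n ℝ) (z : n → ℝ) :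
    z ⬝ᵥ (A *ᵥ z) = ∑ i, ∑ j, z i * (A i j * z j) := by
  simp [dotProduct, Matrix.mulVec, Finset.mul_sum]

lemma aux_int_qf {n : Type*} [Fintype n] {a b : ℝ} (g : ℝ → Matrix n n ℝ)
    (hg : ∀ i j, IntervalIntegrable (fun t => g t i j) volume a b) (z : n → ℝ) :
    IntervalIntegrable (fun t => z ⬝ᵥ (g t *ᵥ z)) volume a b := by
  have : (fun t => z ⬝ᵥ (g t *ᵥ z)) = ∑ i, ∑ j, fun t => z i * (g t i j * z j) := by
    funext t
    simp only [Finset.sum_apply]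
    exact aux_dot_expand (g t) z
  rw [this]
  exact IntervalIntegrable.sum _ fun i _ => IntervalIntegrable.sum _ fun j _ =>
    ((hg i j).mul_const _).const_mul _

lemma aux_quad_integral {n : Type*} [Fintype n] {a b : ℝ} (g : ℝ → Matrix n n ℝ)
    (hg : ∀ i j, IntervalIntegrable (fun t => g t i j) volume a b) (z : n → ℝ) :
    z ⬝ᵥ ((Matrix.of fun i j => ∫ t in a..b, g t i j) *ᵥ z)
      = ∫ t in a..b, z ⬝ᵥ (g t *ᵥ z) := by
  have h1 : ∀ i j : n, IntervalIntegrable (fun t => z i * (g t i j * z j)) volume a b :=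
    fun i j => ((hg i j).mul_const _).const_mul _
  have h2 : ∀ i : n, IntervalIntegrable (fun t => ∑ j, z i * (g t i j * z j)) volume a b := by
    intro i
    have h := IntervalIntegrable.sum Finset.univ (fun j (_ : j ∈ Finset.univ) => h1 i j)
    have he : (fun t => ∑ j, z i * (g t i j * z j)) = ∑ j, fun t => z i * (g t i j * z j) := by
      funext t; simp
    rw [he]; exact h
  calc z ⬝ᵥ ((Matrix.of fun i j => ∫ t in a..b, g t i j) *ᵥ z)
      = ∑ i, ∑ j, z i * ((∫ t in a..b, g t i j) * z j) :=
        aux_dot_expand (Matrix.of fun i j => ∫ t in a..b, g t i j) z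
    _ = ∑ i, ∑ j, ∫ t in a..b, z i * (g t i j * z j) := by
        refine Finset.sum_congr rfl fun i _ => Finset.sum_congr rfl fun j _ => ?_
        rw [intervalIntegral.integral_const_mul, intervalIntegral.integral_mul_const]
    _ = ∑ i, ∫ t in a..b, ∑ j, z i * (g t i j * z j) := by
        refine Finset.sum_congr rfl fun i _ => ?_
        rw [intervalIntegral.integral_finset_sum (fun j _ => h1 i j)]
    _ = ∫ t in a..b, ∑ i, ∑ j, z i * (g t i j * z j) := by
        rw [intervalIntegral.integral_finset_sum (fun i _ => h2 i)]
    _ = ∫ t in a..b, z ⬝ᵥ (g t *ᵥ z) := by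
        refine intervalIntegral.integral_congr fun t _ => ?_
        exact (aux_dot_expand (g t) z).symm


open Matrix MeasureTheory intervalIntegral

/-- Theorem 3.2 (models with no common parameters): the covariance of the BLUE of
`θ⁽¹⁾` from simultaneous estimation in the two dependent groups (the top-left block of
`M⁻¹`) is bounded above, in the Loewner ordering, by the covariance `σ1² M11⁻¹` of the
BLUE obtained from the first group alone. -/
theorem simultaneous_estimation_no_common_parameters
    (p1 p2 : ℕ) (a b : ℝ) (ha : 0 < a) (hab : a < b)
    (σ1 σ2 ρ : ℝ) (hσ1 : 0 < σ1) (hσ2 : 0 < σ2) (hρ : ρ ∈ Set.Ioo (-1 : ℝ) 1)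
    (Sig : Matrix (Fin 2) (Fin 2) ℝ)
    (hSig : Sig = !![σ1 ^ 2, ρ * σ1 * σ2; ρ * σ1 * σ2, σ2 ^ 2])
    (f1 : ℝ → Fin p1 → ℝ) (f2 : ℝ → Fin p2 → ℝ)
    (hf1 : ∀ i, ContDiffOn ℝ 1 (fun t => f1 t i) (Set.Icc a b))
    (hf2 : ∀ i, ContDiffOn ℝ 1 (fun t => f2 t i) (Set.Icc a b))
    (F : ℝ → Matrix (Fin p1 ⊕ Fin p2) (Fin 2) ℝ)
    (hF : ∀ t, F t = Matrix.of fun i j => Sum.elim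
        (fun i1 => if j = 0 then f1 t i1 else 0)
        (fun i2 => if j = 1 then f2 t i2 else 0) i)
    (Fdot : ℝ → Matrix (Fin p1 ⊕ Fin p2) (Fin 2) ℝ)
    (hFdot : ∀ t i j, Fdot t i j = deriv (fun s => F s i j) t)
    (f1dot : ℝ → Fin p1 → ℝ)
    (hf1dot : ∀ t i, f1dot t i = deriv (fun s => f1 s i) t)
    (M : Matrix (Fin p1 ⊕ Fin p2) (Fin p1 ⊕ Fin p2) ℝ)
    (hM : M = (Matrix.of fun i j => ∫ t in a..b, (Fdot t * Sig⁻¹ * (Fdot t)ᵀ) i j)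
        + (1 / a) • (F a * Sig⁻¹ * (F a)ᵀ))
    (M11 : Matrix (Fin p1) (Fin p1) ℝ)
    (hM11 : M11 = (Matrix.of fun i j => ∫ t in a..b, f1dot t i * f1dot t j)
        + (1 / a) • Matrix.vecMulVec (f1 a) (f1 a))
    (hMunit : IsUnit M) (hM11unit : IsUnit M11) :
    (σ1 ^ 2 • M11⁻¹ - (M⁻¹).toBlocks₁₁).PosSemidef := by

  classical
  obtain ⟨hρ1, hρ2⟩ := hρ
  have hd : (0:ℝ) < σ1^2*σ2^2*(1-ρ^2) := by
    have h1 : 0 < 1 - ρ^2 := by nlinarith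
    positivity
  have hdet : Sig.det = σ1^2*σ2^2*(1-ρ^2) := by rw [hSig, Matrix.det_fin_two_of]; ring
  have hSinv : Sig⁻¹ = (σ1^2*σ2^2*(1-ρ^2))⁻¹ • !![σ2^2, -(ρ*σ1*σ2); -(ρ*σ1*σ2), σ1^2] := by
    rw [Matrix.inv_def, hdet, hSig, Matrix.adjugate_fin_two_of, Ring.inverse_eq_inv]
  have hptQ : ∀ v : Fin 2 → ℝ, (1/σ1^2) * (v 0)^2 ≤ v ⬝ᵥ Sig⁻¹ *ᵥ v := by
    intro v
    have hv : v ⬝ᵥ Sig⁻¹ *ᵥ v = (σ2^2*(v 0)^2 - 2*(ρ*σ1*σ2)*(v 0)*(v 1) + σ1^2*(v 1)^2)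
        / (σ1^2*σ2^2*(1-ρ^2)) := by
      simp [hSinv, dotProduct, Matrix.mulVec, Fin.sum_univ_two, div_eq_inv_mul]
      ring
    rw [hv, le_div_iff₀ hd]
    have hσ1' : σ1 ≠ 0 := ne_of_gt hσ1
    have h1 : (1/σ1^2) * (v 0)^2 * (σ1^2*σ2^2*(1-ρ^2)) = (v 0)^2 * (σ2^2*(1-ρ^2)) := by
      field_simp
    rw [h1]
    nlinarith [sq_nonneg (ρ*σ2*v 0 - σ1*v 1)]
  have hSsym : ∀ k l : Fin 2, Sig⁻¹ k l = Sig⁻¹ l k := by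
    intro k l; fin_cases k <;> fin_cases l <;> simp [hSinv]
  -- structure of F and Fdot
  set κ : (Fin p1 ⊕ Fin p2) → Fin 2 := Sum.elim (fun _ => 0) (fun _ => 1) with hκ
  set dd : ℝ → (Fin p1 ⊕ Fin p2) → ℝ :=
    fun t => Sum.elim (f1dot t) (fun i2 => deriv (fun s => f2 s i2) t) with hdd
  set ee : (Fin p1 ⊕ Fin p2) → ℝ := Sum.elim (f1 a) (f2 a) with hee
  have hFe : ∀ s (i : Fin p1 ⊕ Fin p2) (k : Fin 2),
      F s i k = if k = κ i then Sum.elim (f1 s) (f2 s) i else 0 := by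
    intro s i k
    rw [hF]
    rcases i with i1 | i2 <;> fin_cases k <;> simp [hκ]
  have hA : ∀ t (i : Fin p1 ⊕ Fin p2) (k : Fin 2),
      Fdot t i k = if k = κ i then dd t i else 0 := by
    intro t i k
    rw [hFdot]
    have he : (fun s => F s i k) = fun s => if k = κ i then Sum.elim (f1 s) (f2 s) i else 0 :=
      funext fun s => hFe s i k
    rw [he]
    by_cases hk : k = κ i
    · simp only [hk, if_pos rfl]
      rcases i with i1 | i2
      · simpa [hdd] using (hf1dot t i1).symm
      · simp [hdd]
    · simp [hk]
  have hEntry : ∀ (t : ℝ) (i j : Fin p1 ⊕ Fin p2),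
      (Fdot t * Sig⁻¹ * (Fdot t)ᵀ) i j = Sig⁻¹ (κ i) (κ j) * (dd t i * dd t j) := by
    intro t i j
    simp only [Matrix.mul_apply, Matrix.transpose_apply, hA, ite_mul, mul_ite, zero_mul,
      mul_zero, Finset.sum_ite_eq, Finset.sum_ite_eq', Finset.mem_univ, if_true]
    ring
  have hEntryB : ∀ (i j : Fin p1 ⊕ Fin p2),
      (F a * Sig⁻¹ * (F a)ᵀ) i j = Sig⁻¹ (κ i) (κ j) * (ee i * ee j) := by
    intro i j
    simp only [Matrix.mul_apply, Matrix.transpose_apply, hFe, ite_mul, mul_ite, zero_mul,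
      mul_zero, Finset.sum_ite_eq, Finset.sum_ite_eq', Finset.mem_univ, if_true]
    rw [hee]; ring
  -- integrability
  have hcont : ∀ i : Fin p1 ⊕ Fin p2, ∃ g : ℝ → ℝ,
      ContinuousOn g (Set.Icc a b) ∧ ∀ t ∈ Set.Ioo a b, dd t i = g t := by
    intro i
    rcases i with i1 | i2
    · obtain ⟨g, hg, hgt⟩ := aux_deriv_cont hab (hf1 i1)
      exact ⟨g, hg, fun t ht => by rw [hdd]; simp only [Sum.elim_inl]; rw [hf1dot]; exact hgt t ht⟩
    · obtain ⟨g, hg, hgt⟩ := aux_deriv_cont hab (hf2 i2)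
      exact ⟨g, hg, fun t ht => by rw [hdd]; simpa using hgt t ht⟩
  have hInt : ∀ i j : Fin p1 ⊕ Fin p2,
      IntervalIntegrable (fun t => dd t i * dd t j) volume a b :=
    fun i j => aux_II hab (hcont i) (hcont j)
  have hgM : ∀ i j : Fin p1 ⊕ Fin p2,
      IntervalIntegrable (fun t => (Fdot t * Sig⁻¹ * (Fdot t)ᵀ) i j) volume a b := by
    intro i j
    have he : (fun t => (Fdot t * Sig⁻¹ * (Fdot t)ᵀ) i j)
        = fun t => Sig⁻¹ (κ i) (κ j) * (dd t i * dd t j) := funext fun t => hEntry t i j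
    rw [he]
    exact (hInt i j).const_mul _
  have hg11 : ∀ i j : Fin p1,
      IntervalIntegrable (fun t => f1dot t i * f1dot t j) volume a b := by
    intro i j
    have := hInt (Sum.inl i) (Sum.inl j)
    simpa [hdd] using this
  -- quadratic form of M
  have hMq : ∀ z : (Fin p1 ⊕ Fin p2) → ℝ, z ⬝ᵥ M *ᵥ z
      = (∫ t in a..b, ((Fdot t)ᵀ *ᵥ z) ⬝ᵥ Sig⁻¹ *ᵥ ((Fdot t)ᵀ *ᵥ z))
        + (1/a) * (((F a)ᵀ *ᵥ z) ⬝ᵥ Sig⁻¹ *ᵥ ((F a)ᵀ *ᵥ z)) := by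
    intro z
    rw [hM, Matrix.add_mulVec, dotProduct_add, Matrix.smul_mulVec,
      dotProduct_smul, smul_eq_mul]
    congr 1
    · rw [aux_quad_integral (fun t => Fdot t * Sig⁻¹ * (Fdot t)ᵀ) hgM z]
      exact intervalIntegral.integral_congr fun t _ => aux_qf (Fdot t) Sig⁻¹ z
    · rw [aux_qf (F a) Sig⁻¹ z]
  -- quadratic form of M11
  have hM11q : ∀ y : Fin p1 → ℝ, y ⬝ᵥ M11 *ᵥ y
      = (∫ t in a..b, (f1dot t ⬝ᵥ y)^2) + (1/a) * ((f1 a ⬝ᵥ y)^2) := by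
    intro y
    rw [hM11, Matrix.add_mulVec, dotProduct_add, Matrix.smul_mulVec,
      dotProduct_smul, smul_eq_mul]
    congr 1
    · have h := aux_quad_integral (fun t => Matrix.of fun i j => f1dot t i * f1dot t j)
        (fun i j => hg11 i j) y
      simp only [Matrix.of_apply] at h
      rw [h]
      exact intervalIntegral.integral_congr fun t _ => aux_rank1 (f1dot t) y
    · have hvv : Matrix.vecMulVec (f1 a) (f1 a) = Matrix.of fun i j => f1 a i * f1 a j := by
        ext i j; simp [Matrix.vecMulVec_apply]
      rw [hvv, aux_rank1 (f1 a) y]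
  have hM11psd : ∀ y : Fin p1 → ℝ, 0 ≤ y ⬝ᵥ M11 *ᵥ y := by
    intro y
    rw [hM11q y]
    have h1 : 0 ≤ ∫ t in a..b, (f1dot t ⬝ᵥ y)^2 :=
      intervalIntegral.integral_nonneg hab.le fun u _ => sq_nonneg _
    have h2 : (0:ℝ) ≤ 1/a := by positivity
    exact add_nonneg h1 (mul_nonneg h2 (sq_nonneg _))
  -- first components
  have hu0 : ∀ (t : ℝ) (z : (Fin p1 ⊕ Fin p2) → ℝ),
      ((Fdot t)ᵀ *ᵥ z) 0 = f1dot t ⬝ᵥ (fun i => z (Sum.inl i)) := by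
    intro t z
    simp [Matrix.mulVec, dotProduct, Matrix.transpose_apply, Fintype.sum_sum_type,
      hA, hκ, hdd]
  have hub0 : ∀ z : (Fin p1 ⊕ Fin p2) → ℝ,
      ((F a)ᵀ *ᵥ z) 0 = f1 a ⬝ᵥ (fun i => z (Sum.inl i)) := by
    intro z
    simp [Matrix.mulVec, dotProduct, Matrix.transpose_apply, Fintype.sum_sum_type,
      hFe, hκ]
  -- core inequality
  have hCore : ∀ z : (Fin p1 ⊕ Fin p2) → ℝ,
      (1/σ1^2) * ((fun i => z (Sum.inl i)) ⬝ᵥ M11 *ᵥ (fun i => z (Sum.inl i)))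
        ≤ z ⬝ᵥ M *ᵥ z := by
    intro z
    set z1 : Fin p1 → ℝ := fun i => z (Sum.inl i) with hz1
    rw [hMq z, hM11q z1, mul_add]
    have hre : (1/σ1^2) * ∫ t in a..b, (f1dot t ⬝ᵥ z1)^2
        = ∫ t in a..b, (1/σ1^2) * (f1dot t ⬝ᵥ z1)^2 :=
      (intervalIntegral.integral_const_mul _ _).symm
    rw [hre]
    have int1 : IntervalIntegrable (fun t => (1/σ1^2) * (f1dot t ⬝ᵥ z1)^2) volume a b := by
      have he : (fun t => (1/σ1^2) * (f1dot t ⬝ᵥ z1)^2)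
          = fun t => (1/σ1^2) * (z1 ⬝ᵥ ((Matrix.of fun i j => f1dot t i * f1dot t j) *ᵥ z1)) :=
        funext fun t => by rw [aux_rank1 (f1dot t) z1]
      rw [he]
      exact (aux_int_qf (fun t => Matrix.of fun i j => f1dot t i * f1dot t j)
        (fun i j => hg11 i j) z1).const_mul _
    have int2 : IntervalIntegrable
        (fun t => ((Fdot t)ᵀ *ᵥ z) ⬝ᵥ Sig⁻¹ *ᵥ ((Fdot t)ᵀ *ᵥ z)) volume a b := by
      have he : (fun t => ((Fdot t)ᵀ *ᵥ z) ⬝ᵥ Sig⁻¹ *ᵥ ((Fdot t)ᵀ *ᵥ z))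
          = fun t => z ⬝ᵥ ((Fdot t * Sig⁻¹ * (Fdot t)ᵀ) *ᵥ z) :=
        funext fun t => (aux_qf (Fdot t) Sig⁻¹ z).symm
      rw [he]
      exact aux_int_qf (fun t => Fdot t * Sig⁻¹ * (Fdot t)ᵀ) hgM z
    have h1 : (∫ t in a..b, (1/σ1^2) * (f1dot t ⬝ᵥ z1)^2)
        ≤ ∫ t in a..b, ((Fdot t)ᵀ *ᵥ z) ⬝ᵥ Sig⁻¹ *ᵥ ((Fdot t)ᵀ *ᵥ z) := by
      refine intervalIntegral.integral_mono_on hab.le int1 int2 fun t _ => ?_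
      have := hptQ ((Fdot t)ᵀ *ᵥ z)
      rwa [hu0 t z] at this
    have h2 : (1/σ1^2) * ((1/a) * (f1 a ⬝ᵥ z1)^2)
        ≤ (1/a) * (((F a)ᵀ *ᵥ z) ⬝ᵥ Sig⁻¹ *ᵥ ((F a)ᵀ *ᵥ z)) := by
      have := hptQ ((F a)ᵀ *ᵥ z)
      rw [hub0 z] at this
      have ha' : (0:ℝ) ≤ 1/a := by positivity
      calc (1/σ1^2) * ((1/a) * (f1 a ⬝ᵥ z1)^2)
          = (1/a) * ((1/σ1^2) * (f1 a ⬝ᵥ z1)^2) := by ring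
        _ ≤ (1/a) * (((F a)ᵀ *ᵥ z) ⬝ᵥ Sig⁻¹ *ᵥ ((F a)ᵀ *ᵥ z)) :=
            mul_le_mul_of_nonneg_left this ha'
    exact add_le_add h1 h2
  -- symmetry
  have hMij : ∀ i j, M i j = (∫ t in a..b, Sig⁻¹ (κ i) (κ j) * (dd t i * dd t j))
      + (1/a) * (Sig⁻¹ (κ i) (κ j) * (ee i * ee j)) := by
    intro i j
    rw [hM]
    simp only [Matrix.add_apply, Matrix.smul_apply, Matrix.of_apply, smul_eq_mul]
    congr 1
    · exact intervalIntegral.integral_congr fun t _ => hEntry t i j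
    · rw [hEntryB i j]
  have hMsymm : Mᵀ = M := by
    ext i j
    rw [Matrix.transpose_apply, hMij j i, hMij i j]
    congr 1
    · exact intervalIntegral.integral_congr fun t _ => by rw [hSsym (κ j) (κ i)]; ring
    · rw [hSsym (κ j) (κ i)]; ring
  have hM11symm : M11ᵀ = M11 := by
    ext i j
    rw [hM11]
    simp only [Matrix.transpose_apply, Matrix.add_apply, Matrix.smul_apply, Matrix.of_apply,
      Matrix.vecMulVec_apply, smul_eq_mul]
    congr 1
    · exact intervalIntegral.integral_congr fun t _ => by ring
    · ring
  have hdetM : IsUnit M.det := (Matrix.isUnit_iff_isUnit_det M).mp hMunit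
  have hdetM11 : IsUnit M11.det := (Matrix.isUnit_iff_isUnit_det M11).mp hM11unit
  have hMinvT : (M⁻¹)ᵀ = M⁻¹ := by rw [Matrix.transpose_nonsing_inv, hMsymm]
  have hM11invT : (M11⁻¹)ᵀ = M11⁻¹ := by rw [Matrix.transpose_nonsing_inv, hM11symm]
  have hB : ((M⁻¹).toBlocks₁₁)ᵀ = (M⁻¹).toBlocks₁₁ := by
    ext i j
    simp only [Matrix.transpose_apply, Matrix.toBlocks₁₁, Matrix.of_apply]
    conv_lhs => rw [← hMinvT]
    rw [Matrix.transpose_apply]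
  rw [Matrix.posSemidef_iff_dotProduct_mulVec]
  constructor
  · -- Hermitian
    have hT : (σ1 ^ 2 • M11⁻¹ - (M⁻¹).toBlocks₁₁)ᵀ = σ1 ^ 2 • M11⁻¹ - (M⁻¹).toBlocks₁₁ := by
      rw [Matrix.transpose_sub, Matrix.transpose_smul, hM11invT, hB]
    show (σ1 ^ 2 • M11⁻¹ - (M⁻¹).toBlocks₁₁)ᴴ = _
    ext i j
    rw [Matrix.conjTranspose_apply, star_trivial,
      show (σ1 ^ 2 • M11⁻¹ - M⁻¹.toBlocks₁₁) j i
        = ((σ1 ^ 2 • M11⁻¹ - M⁻¹.toBlocks₁₁)ᵀ) i j from rfl, hT]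
  · -- quadratic form
    intro x
    rw [star_trivial]
    set xt : (Fin p1 ⊕ Fin p2) → ℝ := Sum.elim x 0 with hxt
    set z : (Fin p1 ⊕ Fin p2) → ℝ := M⁻¹ *ᵥ xt with hz
    have hMz : M *ᵥ z = xt := by
      rw [hz, Matrix.mulVec_mulVec, Matrix.mul_nonsing_inv M hdetM, Matrix.one_mulVec]
    have h1 : x ⬝ᵥ ((M⁻¹).toBlocks₁₁ *ᵥ x) = x ⬝ᵥ (fun i => z (Sum.inl i)) := by
      simp [dotProduct, Matrix.mulVec, Matrix.toBlocks₁₁, hz, hxt,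
        Fintype.sum_sum_type, Finset.mul_sum]
    have h2 : z ⬝ᵥ (M *ᵥ z) = x ⬝ᵥ (fun i => z (Sum.inl i)) := by
      rw [hMz]
      simp [dotProduct, hxt, Fintype.sum_sum_type, mul_comm]
    have hcz := hCore z
    rw [h2] at hcz
    set z1 : Fin p1 → ℝ := fun i => z (Sum.inl i) with hz1def
    set w : Fin p1 → ℝ := σ1^2 • (M11⁻¹ *ᵥ x) with hwdef
    have hw : M11 *ᵥ w = σ1^2 • x := by
      rw [hwdef, Matrix.mulVec_smul, Matrix.mulVec_mulVec, Matrix.mul_nonsing_inv M11 hdetM11,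
        Matrix.one_mulVec]
    have hq := hM11psd (z1 - w)
    have e1 : z1 ⬝ᵥ (M11 *ᵥ w) = σ1^2 * (x ⬝ᵥ z1) := by
      rw [hw, dotProduct_smul, smul_eq_mul, dotProduct_comm]
    have e2 : w ⬝ᵥ (M11 *ᵥ z1) = σ1^2 * (x ⬝ᵥ z1) := by
      rw [Matrix.dotProduct_mulVec, ← Matrix.mulVec_transpose, hM11symm, hw,
        smul_dotProduct, smul_eq_mul]
    have e3 : w ⬝ᵥ (M11 *ᵥ w) = σ1^2 * σ1^2 * (x ⬝ᵥ M11⁻¹ *ᵥ x) := by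
      rw [hw, dotProduct_smul, smul_eq_mul, hwdef, smul_dotProduct, smul_eq_mul,
        dotProduct_comm]
      ring
    have hexp : (z1 - w) ⬝ᵥ M11 *ᵥ (z1 - w)
        = z1 ⬝ᵥ (M11 *ᵥ z1) - 2*(σ1^2 * (x ⬝ᵥ z1)) + σ1^2 * σ1^2 * (x ⬝ᵥ M11⁻¹ *ᵥ x) := by
      rw [Matrix.mulVec_sub, dotProduct_sub, sub_dotProduct,
        sub_dotProduct, e1, e2, e3]
      ring
    rw [hexp] at hq
    have hσ1sq : (0:ℝ) < σ1^2 := by positivity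
    have hA2 : z1 ⬝ᵥ (M11 *ᵥ z1) ≤ σ1^2 * (x ⬝ᵥ z1) := by
      have h := mul_le_mul_of_nonneg_left hcz hσ1sq.le
      have he : σ1^2 * ((1/σ1^2) * (z1 ⬝ᵥ M11 *ᵥ z1)) = z1 ⬝ᵥ (M11 *ᵥ z1) := by
        field_simp
      rw [he] at h
      exact h
    rw [Matrix.sub_mulVec, dotProduct_sub, Matrix.smul_mulVec,
      dotProduct_smul, smul_eq_mul, sub_nonneg, h1]
    have hgoal : x ⬝ᵥ z1 ≤ σ1^2 * (x ⬝ᵥ M11⁻¹ *ᵥ x) := by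
      nlinarith [hq, hA2, hσ1sq]
    exact hgoal
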